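/- If q satisfies the normalized central configuration equations q_i = Σ_{j≠i} m_j (q_j − q_i)/‖q_j − q_i‖^(α+2) for all i (with center of mass at the origin), then for every pair i < j the Albouy–Chenciner equation holds: 0 = Σ_{k=1}^n m_k [ (r_{ik}^{-(α+2)} + M^{-1})(r_{jk}² − r_{ik}² − r_{ij}²) + (r_{jk}^{-(α+2)} + M^{-1})(r_{ik}² − r_{jk}² − r_{ij}²) ], where r_{ab} = ‖q_a − q_b‖, M = Σ_k m_k, and terms with k = i or k = j are interpreted with the convention S_{kk} = 0. -/

import Mathlib

open Finset

theorem albouy_chenciner_eq (n : ℕ) (hn : 3 ≤ n) (α : ℝ) (hα : 0 ≤ α)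
    (m : Fin n → ℝ) (hm : ∀ i, m i ≠ 0) (M : ℝ) (hM : M = ∑ i, m i) (hM0 : M ≠ 0)
    (q : Fin n → EuclideanSpace ℝ (Fin 2)) (hq : ∀ i j, i ≠ j → q i ≠ q j)
    (hcm : ∑ i, m i • q i = 0)
    (hcc : ∀ i, q i = ∑ j ∈ univ.erase i, (m j / ‖q j - q i‖ ^ (α + 2)) • (q j - q i))
    (r : Fin n → Fin n → ℝ) (hr : ∀ a b, r a b = ‖q a - q b‖)
    (S : Fin n → Fin n → ℝ)
    (hS : ∀ a b, S a b = if b = a then 0 else r a b ^ (-(α + 2)) + M⁻¹) :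
    ∀ i j : Fin n, i < j →
      0 = ∑ k, m k * (S i k * (r j k ^ 2 - r i k ^ 2 - r i j ^ 2)
          + S j k * (r i k ^ 2 - r j k ^ 2 - r i j ^ 2)) := by
  intro i j hij
  have rsymm : ∀ a b, r a b = r b a := by
    intro a b; rw [hr, hr, norm_sub_rev]
  -- Key vector identity: ∑ k, (m k * S a k) • (q k - q a) = 0
  have key : ∀ a : Fin n,
      ∑ k, (m k * S a k) • (q k - q a) = (0 : EuclideanSpace ℝ (Fin 2)) := by
    intro a
    have hSa : (fun k => (m k * S a k) • (q k - q a)) a = 0 := by simp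
    rw [← Finset.sum_erase (univ : Finset (Fin n)) hSa]
    have expand : ∀ k ∈ univ.erase a, (m k * S a k) • (q k - q a)
        = (m k / ‖q k - q a‖ ^ (α + 2)) • (q k - q a)
          + (M⁻¹ * m k) • (q k - q a) := by
      intro k hk
      have hka : k ≠ a := Finset.ne_of_mem_erase hk
      rw [hS, if_neg hka, hr, norm_sub_rev, Real.rpow_neg (norm_nonneg _),
        mul_add, add_smul, div_eq_mul_inv, mul_comm M⁻¹ (m k)]
    rw [Finset.sum_congr rfl expand, Finset.sum_add_distrib, ← hcc a]
    have h2 : ∑ k ∈ univ.erase a, (M⁻¹ * m k) • (q k - q a) = -(q a) := by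
      have hz : (fun k => (M⁻¹ * m k) • (q k - q a)) a = 0 := by simp
      rw [Finset.sum_erase (univ : Finset (Fin n)) hz]
      have : ∀ k : Fin n, (M⁻¹ * m k) • (q k - q a) = M⁻¹ • (m k • (q k - q a)) := by
        intro k; rw [smul_smul]
      simp only [this]
      rw [← Finset.smul_sum]
      have hsum : ∑ k, m k • (q k - q a) = -(M • q a) := by
        have : ∀ k : Fin n, m k • (q k - q a) = m k • q k - m k • q a := by
          intro k; rw [smul_sub]
        simp only [this]
        rw [Finset.sum_sub_distrib, hcm, ← Finset.sum_smul, ← hM, zero_sub]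
      rw [hsum, smul_neg, smul_smul, inv_mul_cancel₀ hM0, one_smul]
    rw [h2, add_neg_cancel]
  -- Inner product identity
  have hin : ∀ a b k : Fin n,
      2 * (inner ℝ (q k - q a) (q a - q b) : ℝ) = r b k ^ 2 - r a k ^ 2 - r a b ^ 2 := by
    intro a b k
    have h := norm_add_sq_real (q k - q a) (q a - q b)
    rw [sub_add_sub_cancel] at h
    rw [hr b k, hr a k, hr a b, norm_sub_rev (q b) (q k), norm_sub_rev (q a) (q k)]
    linarith
  have h1 : (0 : ℝ) = inner ℝ (∑ k, (m k * S i k) • (q k - q i)) (q i - q j) := by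
    rw [key i, inner_zero_left]
  have h2 : (0 : ℝ) = inner ℝ (∑ k, (m k * S j k) • (q k - q j)) (q j - q i) := by
    rw [key j, inner_zero_left]
  rw [sum_inner] at h1 h2
  simp only [real_inner_smul_left] at h1 h2
  calc (0 : ℝ)
      = ∑ k, (2 * (m k * S i k * (inner ℝ (q k - q i) (q i - q j) : ℝ))
          + 2 * (m k * S j k * (inner ℝ (q k - q j) (q j - q i) : ℝ))) := by
        rw [Finset.sum_add_distrib, ← Finset.mul_sum, ← Finset.mul_sum, ← h1, ← h2]; ring
    _ = ∑ k, m k * (S i k * (r j k ^ 2 - r i k ^ 2 - r i j ^ 2)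
          + S j k * (r i k ^ 2 - r j k ^ 2 - r i j ^ 2)) := by
        apply Finset.sum_congr rfl
        intro k _
        have e1 := hin i j k
        have e2 := hin j i k
        rw [rsymm j i] at e2
        linear_combination m k * S i k * e1 + m k * S j k * e2
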